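/- arXiv:2310.15548 — 2 statements merged into one kernel-verified Lean document; each statement's English description precedes it below -/
import Mathlib

section
/- Let σ > 0, let S ∈ ℂ^{N_t×N_t} and F ∈ ℂ^{N_sb×N_sb} be unitary matrices, let E ∈ ℂ^{N_t×N_sb}, and let W = S E Fᴴ. Let 𝒮 ⊆ {1,…,N_t} and ℱ ⊆ {1,…,N_sb} be support sets such that E(v,l) = 0 whenever exactly one of the conditions v ∈ 𝒮, l ∈ ℱ holds, and |E(v,l)| ≤ σ whenever v ∉ 𝒮 and l ∉ ℱ. Let E' be the masked coefficient matrix with E'(v,l) = E(v,l) for (v,l) ∈ 𝒮×ℱ and E'(v,l) = 0 otherwise, and let Ŵ = S E' Fᴴ. Assume every column of W has unit ℓ₂ norm and every column of Ŵ is nonzero with ℓ₂ norm at most 1. Then 1 − ρ(W, Ŵ) ≤ (2/N_sb)·(N_t − |𝒮|)·(N_sb − |ℱ|)·σ². -/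
open Matrix BigOperators

/-- Euclidean (ℓ₂) norm of the `l`-th column of a complex matrix. -/
noncomputable def colNorm {Nt Nsb : ℕ} (W : Matrix (Fin Nt) (Fin Nsb) ℂ) (l : Fin Nsb) : ℝ :=
  Real.sqrt (∑ v, Complex.normSq (W v l))

/-- Hermitian inner product `W(:,l)ᴴ W'(:,l)` of the `l`-th columns. -/
noncomputable def colInner {Nt Nsb : ℕ} (W W' : Matrix (Fin Nt) (Fin Nsb) ℂ) (l : Fin Nsb) : ℂ :=
  ∑ v, (starRingEnd ℂ) (W v l) * (W' v l)

/-- Squared generalized cosine similarity (SGCS). -/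
noncomputable def sgcs {Nt Nsb : ℕ} (W W' : Matrix (Fin Nt) (Fin Nsb) ℂ) : ℝ :=
  (1 / (Nsb : ℝ)) *
    ∑ l, (‖colInner W W' l‖ / (colNorm W l * colNorm W' l)) ^ 2

noncomputable def colVec {Nt Nsb : ℕ} (W : Matrix (Fin Nt) (Fin Nsb) ℂ) (l : Fin Nsb) :
    EuclideanSpace ℂ (Fin Nt) := WithLp.toLp 2 (fun v => W v l)

lemma colNorm_eq {Nt Nsb : ℕ} (W : Matrix (Fin Nt) (Fin Nsb) ℂ) (l : Fin Nsb) :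
    colNorm W l = ‖colVec W l‖ := by
  rw [EuclideanSpace.norm_eq]
  simp [colNorm, colVec, Complex.sq_norm]

lemma colInner_eq {Nt Nsb : ℕ} (W W' : Matrix (Fin Nt) (Fin Nsb) ℂ) (l : Fin Nsb) :
    colInner W W' l = inner ℂ (colVec W l) (colVec W' l) := by
  rw [PiLp.inner_apply]
  simp [colInner, colVec, RCLike.inner_apply, mul_comm]

lemma abs_colInner_le {Nt Nsb : ℕ} (W W' : Matrix (Fin Nt) (Fin Nsb) ℂ) (l : Fin Nsb) :
    ‖colInner W W' l‖ ≤ colNorm W l * colNorm W' l := by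
  rw [colInner_eq, colNorm_eq, colNorm_eq]
  exact norm_inner_le_norm _ _

lemma colNorm_sq {Nt Nsb : ℕ} (W : Matrix (Fin Nt) (Fin Nsb) ℂ) (l : Fin Nsb) :
    (colNorm W l) ^ 2 = ∑ v, Complex.normSq (W v l) := by
  rw [colNorm, Real.sq_sqrt]
  exact Finset.sum_nonneg fun v _ => Complex.normSq_nonneg _

lemma colNorm_nonneg {Nt Nsb : ℕ} (W : Matrix (Fin Nt) (Fin Nsb) ℂ) (l : Fin Nsb) :
    0 ≤ colNorm W l := Real.sqrt_nonneg _

lemma colInner_diag {Nt Nsb : ℕ} (W W' : Matrix (Fin Nt) (Fin Nsb) ℂ) (l : Fin Nsb) :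
    colInner W W' l = (Wᴴ * W') l l := by
  simp [colInner, Matrix.mul_apply, Matrix.conjTranspose_apply]

lemma tr_aux {Nt Nsb : ℕ} (S : Matrix (Fin Nt) (Fin Nt) ℂ) (F : Matrix (Fin Nsb) (Fin Nsb) ℂ)
    (A B : Matrix (Fin Nt) (Fin Nsb) ℂ) (hS : Sᴴ * S = 1) (hF : Fᴴ * F = 1) :
    Matrix.trace ((S * A * Fᴴ)ᴴ * (S * B * Fᴴ)) = Matrix.trace (Aᴴ * B) := by
  have h1 : (S * A * Fᴴ)ᴴ * (S * B * Fᴴ) = F * (Aᴴ * B) * Fᴴ := by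
    rw [conjTranspose_mul, conjTranspose_mul, conjTranspose_conjTranspose]
    simp only [Matrix.mul_assoc]
    rw [show Sᴴ * (S * (B * Fᴴ)) = B * Fᴴ by rw [← Matrix.mul_assoc, hS, Matrix.one_mul]]
  rw [h1, Matrix.trace_mul_comm, ← Matrix.mul_assoc, hF, Matrix.one_mul]

lemma sum_colInner_eq {Nt Nsb : ℕ} (A B : Matrix (Fin Nt) (Fin Nsb) ℂ) :
    ∑ l, colInner A B l = Matrix.trace (Aᴴ * B) := by
  simp [Matrix.trace, Matrix.diag, colInner_diag]

lemma conj_mul_re (z : ℂ) : ((starRingEnd ℂ) z * z).re = Complex.normSq z := by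
  rw [mul_comm, Complex.mul_conj]; simp

lemma trace_re {Nt Nsb : ℕ} (A B : Matrix (Fin Nt) (Fin Nsb) ℂ) :
    (Matrix.trace (Aᴴ * B)).re = ∑ l, ∑ v, ((starRingEnd ℂ) (A v l) * B v l).re := by
  simp [Matrix.trace, Matrix.diag, Matrix.mul_apply, Matrix.conjTranspose_apply, Complex.re_sum]

lemma percol_arith (a n r : ℝ) (hpos : 0 < n) (hn1 : n ≤ 1) (ha0 : 0 ≤ a)
    (hcs : a ≤ n) (hre : r ≤ a) : 1 - (a / n) ^ 2 ≤ 2 * (1 - r) := by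
  have key : a ^ 2 ≤ (a / n) ^ 2 := by
    rw [div_pow, le_div_iff₀ (by positivity)]
    have hn2 : n ^ 2 ≤ 1 := by nlinarith
    nlinarith [mul_nonneg (sq_nonneg a) (sub_nonneg.mpr hn2)]
  nlinarith [key, sq_nonneg (1 - a)]

theorem sgcs_dominant_approximation
    {Nt Nsb : ℕ} (hNsb : 0 < Nsb)
    (σ : ℝ) (hσ : 0 < σ)
    (S : Matrix (Fin Nt) (Fin Nt) ℂ) (F : Matrix (Fin Nsb) (Fin Nsb) ℂ)
    (hS : Sᴴ * S = 1 ∧ S * Sᴴ = 1) (hF : Fᴴ * F = 1 ∧ F * Fᴴ = 1)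
    (E : Matrix (Fin Nt) (Fin Nsb) ℂ)
    (W : Matrix (Fin Nt) (Fin Nsb) ℂ) (hW : W = S * E * Fᴴ)
    (𝒮 : Finset (Fin Nt)) (ℱ : Finset (Fin Nsb))
    (hE0 : ∀ v l, ((v ∈ 𝒮 ∧ l ∉ ℱ) ∨ (v ∉ 𝒮 ∧ l ∈ ℱ)) → E v l = 0)
    (hEσ : ∀ v l, v ∉ 𝒮 → l ∉ ℱ → ‖E v l‖ ≤ σ)
    (E' : Matrix (Fin Nt) (Fin Nsb) ℂ)
    (hE' : ∀ v l, E' v l = if v ∈ 𝒮 ∧ l ∈ ℱ then E v l else 0)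
    (What : Matrix (Fin Nt) (Fin Nsb) ℂ) (hWhat : What = S * E' * Fᴴ)
    (hWcol : ∀ l, colNorm W l = 1)
    (hWhatcol : ∀ l, colNorm What l ≠ 0 ∧ colNorm What l ≤ 1) :
    1 - sgcs W What ≤
      (2 / (Nsb : ℝ)) * ((Nt : ℝ) - 𝒮.card) * ((Nsb : ℝ) - ℱ.card) * σ ^ 2 := by
  obtain ⟨hS1, -⟩ := hS
  obtain ⟨hF1, -⟩ := hF
  have hN : (Nsb : ℝ) ≠ 0 := Nat.cast_ne_zero.mpr hNsb.ne'
  -- trace identities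
  have h_tr1 : ∑ l, colInner W W l = Matrix.trace (Eᴴ * E) := by
    rw [sum_colInner_eq, hW, tr_aux S F E E hS1 hF1]
  have h_tr2 : ∑ l, colInner W What l = Matrix.trace (Eᴴ * E') := by
    rw [sum_colInner_eq, hW, hWhat, tr_aux S F E E' hS1 hF1]
  -- real-part sums
  have hA : (Nsb : ℝ) = ∑ l, ∑ v, Complex.normSq (E v l) := by
    have h1 : ∀ l : Fin Nsb, (colInner W W l).re = 1 := by
      intro l
      have h := colNorm_sq W l
      rw [hWcol l, one_pow] at h
      rw [colInner, Complex.re_sum]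
      rw [show (1:ℝ) = ∑ v, Complex.normSq (W v l) from h]
      exact Finset.sum_congr rfl fun v _ => conj_mul_re _
    have h2 : (∑ l, colInner W W l).re = (Nsb : ℝ) := by
      rw [Complex.re_sum]
      simp [h1]
    rw [← h2, h_tr1, trace_re]
    exact Finset.sum_congr rfl fun l _ => Finset.sum_congr rfl fun v _ => conj_mul_re _
  have hB : ∑ l, (colInner W What l).re =
      ∑ l, ∑ v, (if v ∈ 𝒮 ∧ l ∈ ℱ then Complex.normSq (E v l) else 0) := by
    rw [← Complex.re_sum, h_tr2, trace_re]
    refine Finset.sum_congr rfl fun l _ => Finset.sum_congr rfl fun v _ => ?_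
    rw [hE' v l]
    by_cases h : v ∈ 𝒮 ∧ l ∈ ℱ
    · simp only [h, if_true]
      exact conj_mul_re _
    · simp [h]
  -- pointwise split of the energy
  have hsplit : ∀ v l, Complex.normSq (E v l) =
      (if v ∈ 𝒮 ∧ l ∈ ℱ then Complex.normSq (E v l) else 0)
      + (if v ∉ 𝒮 ∧ l ∉ ℱ then Complex.normSq (E v l) else 0) := by
    intro v l
    by_cases hv : v ∈ 𝒮 <;> by_cases hl : l ∈ ℱ
    · simp [hv, hl]
    · simp [hv, hl, hE0 v l (Or.inl ⟨hv, hl⟩)]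
    · simp [hv, hl, hE0 v l (Or.inr ⟨hv, hl⟩)]
    · simp [hv, hl]
  have hgap : (Nsb : ℝ) - ∑ l, (colInner W What l).re =
      ∑ l, ∑ v, (if v ∉ 𝒮 ∧ l ∉ ℱ then Complex.normSq (E v l) else 0) := by
    rw [hA, hB, ← Finset.sum_sub_distrib]
    refine Finset.sum_congr rfl fun l _ => ?_
    rw [← Finset.sum_sub_distrib]
    refine Finset.sum_congr rfl fun v _ => ?_
    by_cases hv : v ∈ 𝒮 <;> by_cases hl : l ∈ ℱ
    · simp [hv, hl]
    · simp [hv, hl, hE0 v l (Or.inl ⟨hv, hl⟩)]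
    · simp [hv, hl, hE0 v l (Or.inr ⟨hv, hl⟩)]
    · simp [hv, hl]
  -- bound on the gap
  have hgap_le : ∑ l, ∑ v, (if v ∉ 𝒮 ∧ l ∉ ℱ then Complex.normSq (E v l) else 0) ≤
      ((Nt : ℝ) - 𝒮.card) * ((Nsb : ℝ) - ℱ.card) * σ ^ 2 := by
    have step1 : ∑ l, ∑ v, (if v ∉ 𝒮 ∧ l ∉ ℱ then Complex.normSq (E v l) else 0) ≤
        ∑ l, ∑ v, (if v ∉ 𝒮 ∧ l ∉ ℱ then σ ^ 2 else 0) := by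
      refine Finset.sum_le_sum fun l _ => Finset.sum_le_sum fun v _ => ?_
      by_cases h : v ∉ 𝒮 ∧ l ∉ ℱ
      · simp only [h, if_true]
        rw [← Complex.sq_norm]
        exact pow_le_pow_left₀ (norm_nonneg _) (hEσ v l h.1 h.2) 2
      · simp [h]
    have count_aux : ∀ {n : ℕ} (s : Finset (Fin n)) (c : ℝ),
        ∑ v : Fin n, (if v ∉ s then c else 0) = ((n : ℝ) - s.card) * c := by
      intro n s c
      rw [← Finset.sum_filter, Finset.sum_const]
      rw [show Finset.filter (fun v => v ∉ s) Finset.univ = sᶜ by ext v; simp]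
      rw [Finset.card_compl, nsmul_eq_mul, Nat.cast_sub (Finset.card_le_univ s)]
      simp
    have step2 : ∑ l : Fin Nsb, ∑ v : Fin Nt, (if v ∉ 𝒮 ∧ l ∉ ℱ then σ ^ 2 else 0) =
        ((Nt : ℝ) - 𝒮.card) * ((Nsb : ℝ) - ℱ.card) * σ ^ 2 := by
      have inner : ∀ l : Fin Nsb, ∑ v : Fin Nt, (if v ∉ 𝒮 ∧ l ∉ ℱ then σ ^ 2 else 0) =
          (if l ∉ ℱ then ((Nt : ℝ) - 𝒮.card) * σ ^ 2 else 0) := by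
        intro l
        by_cases hl : l ∈ ℱ
        · simp [hl]
        · simp only [hl, not_false_eq_true, and_true, if_true]
          exact count_aux 𝒮 (σ ^ 2)
      simp only [inner]
      rw [count_aux]
      ring
    linarith [step1, step2.le, step2.ge]
  -- per-column inequality
  have hcol : ∀ l, 1 - (‖colInner W What l‖ /
      (colNorm W l * colNorm What l)) ^ 2 ≤ 2 * (1 - (colInner W What l).re) := by
    intro l
    obtain ⟨hn0, hn1⟩ := hWhatcol l
    have hW1 := hWcol l
    have hnn : 0 ≤ colNorm What l := colNorm_nonneg _ _
    have hpos : 0 < colNorm What l := lt_of_le_of_ne hnn (Ne.symm hn0)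
    have hcs : ‖colInner W What l‖ ≤ colNorm What l := by
      have := abs_colInner_le W What l
      rwa [hW1, one_mul] at this
    have hre : (colInner W What l).re ≤ ‖colInner W What l‖ :=
      Complex.re_le_norm _
    have ha0 : 0 ≤ ‖colInner W What l‖ := norm_nonneg _
    rw [hW1, one_mul]
    exact percol_arith _ _ _ hpos hn1 ha0 hcs hre
  -- assemble
  have hsum : ∑ l, (1 - (‖colInner W What l‖ /
      (colNorm W l * colNorm What l)) ^ 2) ≤
      2 * ((Nsb : ℝ) - ∑ l, (colInner W What l).re) := by
    calc ∑ l, (1 - (‖colInner W What l‖ /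
        (colNorm W l * colNorm What l)) ^ 2)
        ≤ ∑ l, 2 * (1 - (colInner W What l).re) :=
          Finset.sum_le_sum fun l _ => hcol l
      _ = 2 * ((Nsb : ℝ) - ∑ l, (colInner W What l).re) := by
          rw [← Finset.mul_sum, Finset.sum_sub_distrib]
          simp [Finset.card_univ]
  have hsgcs : 1 - sgcs W What = (1 / (Nsb : ℝ)) *
      ∑ l, (1 - (‖colInner W What l‖ /
        (colNorm W l * colNorm What l)) ^ 2) := by
    rw [sgcs, Finset.sum_sub_distrib]
    simp only [Finset.sum_const, Finset.card_univ, Fintype.card_fin, nsmul_eq_mul, mul_one]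
    field_simp
  rw [hsgcs]
  have h1N : 0 ≤ 1 / (Nsb : ℝ) := by positivity
  calc (1 / (Nsb : ℝ)) * ∑ l, (1 - (‖colInner W What l‖ /
        (colNorm W l * colNorm What l)) ^ 2)
      ≤ (1 / (Nsb : ℝ)) * (2 * ((Nsb : ℝ) - ∑ l, (colInner W What l).re)) :=
        mul_le_mul_of_nonneg_left hsum h1N
    _ = (2 / (Nsb : ℝ)) * ((Nsb : ℝ) - ∑ l, (colInner W What l).re) := by ring
    _ ≤ (2 / (Nsb : ℝ)) * (((Nt : ℝ) - 𝒮.card) * ((Nsb : ℝ) - ℱ.card) * σ ^ 2) := by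
        rw [hgap]
        exact mul_le_mul_of_nonneg_left hgap_le (by positivity)
    _ = (2 / (Nsb : ℝ)) * ((Nt : ℝ) - 𝒮.card) * ((Nsb : ℝ) - ℱ.card) * σ ^ 2 := by ring
end

section
/- Let Θ, A, B be random variables on a probability space taking values in finite types, and let g be a function of two arguments such that for every value a of A the map b ↦ g(a,b) is injective. Assume that B is independent of A, and that B and A are conditionally independent given Θ (i.e., for every θ with P(Θ=θ) > 0 and all values a, b: P(B=b, A=a | Θ=θ) = P(B=b | Θ=θ)·P(A=a | Θ=θ)). Let T = g(A,B). Then the conditional mutual information satisfies I(Θ ; T | A) = H(Θ) − H(Θ | B). -/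
open BigOperators

/-- Probability that the finitely-valued random variable `X` equals `x`,
under the probability mass function `p` on the finite sample space `Ω`. -/
def prEq {Ω α : Type*} [Fintype Ω] [DecidableEq α]
    (p : Ω → ℝ) (X : Ω → α) (x : α) : ℝ :=
  ∑ ω ∈ Finset.univ.filter (fun ω => X ω = x), p ω

/-- Shannon entropy `H(X)` of a finitely-valued random variable
(with the convention `0 · log 0 = 0`, valid since `Real.log 0 = 0`). -/
noncomputable def entropy {Ω α : Type*} [Fintype Ω] [Fintype α] [DecidableEq α]
    (p : Ω → ℝ) (X : Ω → α) : ℝ :=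
  -∑ x, prEq p X x * Real.log (prEq p X x)

/-- Conditional entropy `H(X | Y) = H(X, Y) - H(Y)`. -/
noncomputable def condEntropy {Ω α β : Type*} [Fintype Ω]
    [Fintype α] [DecidableEq α] [Fintype β] [DecidableEq β]
    (p : Ω → ℝ) (X : Ω → α) (Y : Ω → β) : ℝ :=
  entropy p (fun ω => (X ω, Y ω)) - entropy p Y

/-- Mutual information `I(X ; Y) = H(X) - H(X | Y)`. -/
noncomputable def mutualInfo {Ω α β : Type*} [Fintype Ω]
    [Fintype α] [DecidableEq α] [Fintype β] [DecidableEq β]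
    (p : Ω → ℝ) (X : Ω → α) (Y : Ω → β) : ℝ :=
  entropy p X - condEntropy p X Y

/-- Conditional mutual information `I(X ; Y | Z) = H(X | Z) - H(X | Y, Z)`. -/
noncomputable def condMutualInfo {Ω α β γ : Type*} [Fintype Ω]
    [Fintype α] [DecidableEq α] [Fintype β] [DecidableEq β] [Fintype γ] [DecidableEq γ]
    (p : Ω → ℝ) (X : Ω → α) (Y : Ω → β) (Z : Ω → γ) : ℝ :=
  condEntropy p X Z - condEntropy p X (fun ω => (Y ω, Z ω))

section aux
variable {Ω α β γ : Type*} [Fintype Ω]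

lemma prEq_nonneg [DecidableEq α] (p : Ω → ℝ) (hp : ∀ ω, 0 ≤ p ω) (X : Ω → α) (x : α) :
    0 ≤ prEq p X x := Finset.sum_nonneg fun ω _ => hp ω

lemma sum_prEq [Fintype α] [DecidableEq α] (p : Ω → ℝ) (X : Ω → α) :
    ∑ x, prEq p X x = ∑ ω, p ω := by
  unfold prEq
  exact Finset.sum_fiberwise _ _ _

lemma prEq_fst [Fintype β] [DecidableEq α] [DecidableEq β]
    (p : Ω → ℝ) (X : Ω → α) (Y : Ω → β) (x : α) :
    ∑ y, prEq p (fun ω => (X ω, Y ω)) (x, y) = prEq p X x := by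
  unfold prEq
  rw [← Finset.sum_fiberwise (Finset.univ.filter (fun ω => X ω = x)) Y p]
  refine Finset.sum_congr rfl fun y _ => ?_
  congr 1
  ext ω
  simp [Prod.ext_iff, and_comm]

lemma prEq_snd [Fintype α] [DecidableEq α] [DecidableEq β]
    (p : Ω → ℝ) (X : Ω → α) (Y : Ω → β) (y : β) :
    ∑ x, prEq p (fun ω => (X ω, Y ω)) (x, y) = prEq p Y y := by
  unfold prEq
  rw [← Finset.sum_fiberwise (Finset.univ.filter (fun ω => Y ω = y)) X p]
  refine Finset.sum_congr rfl fun x _ => ?_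
  congr 1
  ext ω
  simp [Prod.ext_iff, and_comm]

lemma prEq_eq_zero_of [DecidableEq α] [DecidableEq γ] (p : Ω → ℝ) (hp : ∀ ω, 0 ≤ p ω)
    (Z : Ω → α) (W : Ω → γ) (v : α) (w : γ) (h : ∀ ω, Z ω = v → W ω = w)
    (h0 : prEq p W w = 0) : prEq p Z v = 0 := by
  have hz : ∀ ω ∈ Finset.univ.filter (fun ω => W ω = w), p ω = 0 :=
    (Finset.sum_eq_zero_iff_of_nonneg (fun ω _ => hp ω)).1 h0
  refine Finset.sum_eq_zero fun ω hω => ?_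
  simp only [Finset.mem_filter, Finset.mem_univ, true_and] at hω
  exact hz ω (by simp [h ω hω])

lemma entropy_comp_inj [Fintype α] [DecidableEq α] [Fintype β] [DecidableEq β]
    (p : Ω → ℝ) (X : Ω → α) (f : α → β) (hf : Function.Injective f) :
    entropy p (fun ω => f (X ω)) = entropy p X := by
  unfold entropy
  congr 1
  rw [← Finset.sum_subset (Finset.subset_univ (Finset.univ.image f))]
  · rw [Finset.sum_image (fun a _ b _ h => hf h)]
    refine Finset.sum_congr rfl fun x _ => ?_
    have : prEq p (fun ω => f (X ω)) (f x) = prEq p X x := by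
      unfold prEq; congr 1; ext ω; simp [hf.eq_iff]
    rw [this]
  · intro y _ hy
    have : prEq p (fun ω => f (X ω)) y = 0 := by
      refine Finset.sum_eq_zero fun ω hω => ?_
      simp only [Finset.mem_filter, Finset.mem_univ, true_and] at hω
      exact absurd (Finset.mem_image.2 ⟨X ω, Finset.mem_univ _, hω⟩) hy
    simp [this]

end aux

lemma mul_log_mul (x y : ℝ) :
    x * y * Real.log (x * y) = x * y * Real.log x + x * y * Real.log y := by
  rcases eq_or_ne x 0 with hx | hx
  · simp [hx]
  rcases eq_or_ne y 0 with hy | hy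
  · simp [hy]
  rw [Real.log_mul hx hy]; ring

lemma mul_div_log (x y c : ℝ) (hc : c ≠ 0) :
    x * y / c * Real.log (x * y / c) =
      x * y / c * Real.log x + x * y / c * Real.log y - x * y / c * Real.log c := by
  rcases eq_or_ne x 0 with hx | hx
  · simp [hx]
  rcases eq_or_ne y 0 with hy | hy
  · simp [hy]
  rw [Real.log_div (mul_ne_zero hx hy) hc, Real.log_mul hx hy]; ring

lemma sum_rot {bty aty θty : Type*} [Fintype bty] [Fintype aty] [Fintype θty]
    (f : bty → aty → θty → ℝ) :
    ∑ b, ∑ a, ∑ θ, f b a θ = ∑ θ, ∑ b, ∑ a, f b a θ := by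
  rw [show (∑ b, ∑ a, ∑ θ, f b a θ) = ∑ b, ∑ θ, ∑ a, f b a θ from
    Finset.sum_congr rfl fun b _ => Finset.sum_comm]
  exact Finset.sum_comm

section big
variable {Ω θty aty bty : Type*} [Fintype Ω]
  [Fintype θty] [DecidableEq θty] [Fintype aty] [DecidableEq aty]
  [Fintype bty] [DecidableEq bty]

lemma entropy_pair_indep (p : Ω → ℝ) (hp1 : ∑ ω, p ω = 1)
    (A : Ω → aty) (B : Ω → bty)
    (hindep : ∀ a b,
      prEq p (fun ω => (B ω, A ω)) (b, a) = prEq p B b * prEq p A a) :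
    entropy p (fun ω => (B ω, A ω)) = entropy p B + entropy p A := by
  have hA : ∑ a, prEq p A a = 1 := by rw [sum_prEq, hp1]
  have hB : ∑ b, prEq p B b = 1 := by rw [sum_prEq, hp1]
  unfold entropy
  rw [Fintype.sum_prod_type]
  have key : ∀ b, ∑ a, prEq p (fun ω => (B ω, A ω)) (b, a) *
        Real.log (prEq p (fun ω => (B ω, A ω)) (b, a)) =
      prEq p B b * Real.log (prEq p B b) + prEq p B b * (∑ a, prEq p A a * Real.log (prEq p A a)) := by
    intro b
    have : ∀ a, prEq p (fun ω => (B ω, A ω)) (b, a) *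
        Real.log (prEq p (fun ω => (B ω, A ω)) (b, a)) =
        (prEq p B b * Real.log (prEq p B b)) * prEq p A a
          + prEq p B b * (prEq p A a * Real.log (prEq p A a)) := by
      intro a
      rw [hindep]
      have := mul_log_mul (prEq p B b) (prEq p A a)
      linarith
    simp_rw [this, Finset.sum_add_distrib, ← Finset.mul_sum, hA, mul_one]
  simp_rw [key, Finset.sum_add_distrib, ← Finset.sum_mul, hB, one_mul]
  ring

lemma entropy_triple_condindep (p : Ω → ℝ) (hp : ∀ ω, 0 ≤ p ω)
    (Θ : Ω → θty) (A : Ω → aty) (B : Ω → bty)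
    (hcondindep : ∀ θ, 0 < prEq p Θ θ → ∀ a b,
      prEq p (fun ω => (B ω, A ω, Θ ω)) (b, a, θ) / prEq p Θ θ =
        (prEq p (fun ω => (B ω, Θ ω)) (b, θ) / prEq p Θ θ) *
          (prEq p (fun ω => (A ω, Θ ω)) (a, θ) / prEq p Θ θ)) :
    entropy p (fun ω => (B ω, A ω, Θ ω)) + entropy p Θ =
      entropy p (fun ω => (B ω, Θ ω)) + entropy p (fun ω => (A ω, Θ ω)) := by
  set PB : bty → θty → ℝ := fun b θ => prEq p (fun ω => (B ω, Θ ω)) (b, θ) with hPB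
  set PA : aty → θty → ℝ := fun a θ => prEq p (fun ω => (A ω, Θ ω)) (a, θ) with hPA
  set P3 : bty → aty → θty → ℝ := fun b a θ => prEq p (fun ω => (B ω, A ω, Θ ω)) (b, a, θ) with hP3
  set PT : θty → ℝ := fun θ => prEq p Θ θ with hPT
  have perθ : ∀ θ, ∑ b, ∑ a, P3 b a θ * Real.log (P3 b a θ) =
      (∑ b, PB b θ * Real.log (PB b θ)) + (∑ a, PA a θ * Real.log (PA a θ))
        - PT θ * Real.log (PT θ) := by
    intro θ
    rcases lt_or_eq_of_le (prEq_nonneg p hp Θ θ) with hθ | hθ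
    · -- positive case
      have hc : PT θ ≠ 0 := ne_of_gt hθ
      have h3 : ∀ b a, P3 b a θ = PB b θ * PA a θ / PT θ := by
        intro b a
        have h := hcondindep θ hθ a b
        field_simp at h ⊢
        have h' : (P3 b a θ * PT θ) * PT θ = (PB b θ * PA a θ) * PT θ := by
          have e1 : P3 b a θ * (PT θ * PT θ) = (P3 b a θ * PT θ) * PT θ := by ring
          have e2 : PB b θ * PA a θ * PT θ = (PB b θ * PA a θ) * PT θ := by ring
          calc (P3 b a θ * PT θ) * PT θ = P3 b a θ * (PT θ * PT θ) := by ring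
            _ = PB b θ * PA a θ * PT θ := by
              have h2 : P3 b a θ * PT θ = PB b θ * PA a θ := h
              linear_combination PT θ * h2
            _ = (PB b θ * PA a θ) * PT θ := by ring
        exact mul_right_cancel₀ hc h'
      have hmB : ∑ b, PB b θ = PT θ := prEq_snd p B Θ θ
      have hmA : ∑ a, PA a θ = PT θ := prEq_snd p A Θ θ
      simp_rw [h3, mul_div_log _ _ _ hc, Finset.sum_sub_distrib, Finset.sum_add_distrib]
      have t1 : ∑ b, ∑ a, PB b θ * PA a θ / PT θ * Real.log (PB b θ) =
          ∑ b, PB b θ * Real.log (PB b θ) := by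
        refine Finset.sum_congr rfl fun b _ => ?_
        have : ∀ a, PB b θ * PA a θ / PT θ * Real.log (PB b θ) =
            (PB b θ * Real.log (PB b θ) / PT θ) * PA a θ := fun a => by ring
        simp_rw [this, ← Finset.mul_sum, hmA]
        field_simp
      have t2 : ∑ b, ∑ a, PB b θ * PA a θ / PT θ * Real.log (PA a θ) =
          ∑ a, PA a θ * Real.log (PA a θ) := by
        have : ∀ b, ∑ a, PB b θ * PA a θ / PT θ * Real.log (PA a θ) =
            (PB b θ / PT θ) * ∑ a, PA a θ * Real.log (PA a θ) := by
          intro b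
          rw [Finset.mul_sum]
          exact Finset.sum_congr rfl fun a _ => by ring
        simp_rw [this, ← Finset.sum_mul, ← Finset.sum_div, hmB]
        field_simp
      have t3 : ∑ b, ∑ a, PB b θ * PA a θ / PT θ * Real.log (PT θ) =
          PT θ * Real.log (PT θ) := by
        have : ∀ b, ∑ a, PB b θ * PA a θ / PT θ * Real.log (PT θ) =
            PB b θ * (Real.log (PT θ) / PT θ) * ∑ a, PA a θ := by
          intro b
          rw [Finset.mul_sum]
          exact Finset.sum_congr rfl fun a _ => by ring
        simp_rw [this, hmA]
        rw [show ∀ x : bty → ℝ, (∑ b, x b) = ∑ b, x b from fun _ => rfl]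
        rw [← Finset.sum_mul, ← Finset.sum_mul, hmB]
        field_simp
      rw [t1, t2, t3]
    · -- zero case
      have h0 : PT θ = 0 := hθ.symm
      have hB0 : ∀ b, PB b θ = 0 := fun b =>
        prEq_eq_zero_of p hp _ Θ (b, θ) θ (fun ω h => (Prod.mk.injEq _ _ _ _ ▸ h).2) h0
      have hA0 : ∀ a, PA a θ = 0 := fun a =>
        prEq_eq_zero_of p hp _ Θ (a, θ) θ (fun ω h => (Prod.mk.injEq _ _ _ _ ▸ h).2) h0
      have h30 : ∀ b a, P3 b a θ = 0 := fun b a =>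
        prEq_eq_zero_of p hp _ Θ (b, a, θ) θ (fun ω h => by
          simp only [Prod.mk.injEq] at h; exact h.2.2) h0
      simp [h30, hB0, hA0, h0]
  have E3 : entropy p (fun ω => (B ω, A ω, Θ ω)) =
      -∑ θ, ∑ b, ∑ a, P3 b a θ * Real.log (P3 b a θ) := by
    unfold entropy
    rw [Fintype.sum_prod_type]
    simp_rw [Fintype.sum_prod_type]
    rw [sum_rot]
  have E2B : entropy p (fun ω => (B ω, Θ ω)) =
      -∑ θ, ∑ b, PB b θ * Real.log (PB b θ) := by
    unfold entropy
    rw [Fintype.sum_prod_type, Finset.sum_comm]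
  have E2A : entropy p (fun ω => (A ω, Θ ω)) =
      -∑ θ, ∑ a, PA a θ * Real.log (PA a θ) := by
    unfold entropy
    rw [Fintype.sum_prod_type, Finset.sum_comm]
  have ET : entropy p Θ = -∑ θ, PT θ * Real.log (PT θ) := by
    unfold entropy
    rfl
  rw [E3, E2B, E2A, ET]
  simp_rw [perθ, Finset.sum_sub_distrib, Finset.sum_add_distrib]
  ring

end big

lemma entropy_comp_inj' {Ω α β : Type*} [Fintype Ω] [Fintype α] [DecidableEq α]
    [Fintype β] [DecidableEq β] (p : Ω → ℝ) (X : Ω → α) (Y : Ω → β)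
    (f : α → β) (hf : Function.Injective f) (h : ∀ ω, Y ω = f (X ω)) :
    entropy p Y = entropy p X := by
  rw [show Y = fun ω => f (X ω) from funext h]
  exact entropy_comp_inj p X f hf

theorem condMutualInfo_new_task'
    {Ω θty aty bty τty : Type*} [Fintype Ω]
    [Fintype θty] [DecidableEq θty] [Fintype aty] [DecidableEq aty]
    [Fintype bty] [DecidableEq bty] [Fintype τty] [DecidableEq τty]
    (p : Ω → ℝ) (hp : ∀ ω, 0 ≤ p ω) (hp1 : ∑ ω, p ω = 1)
    (Θ : Ω → θty) (A : Ω → aty) (B : Ω → bty)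
    (g : aty → bty → τty) (hg : ∀ a, Function.Injective (g a))
    (hindep : ∀ a b,
      prEq p (fun ω => (B ω, A ω)) (b, a) = prEq p B b * prEq p A a)
    (hcondindep : ∀ θ, 0 < prEq p Θ θ → ∀ a b,
      prEq p (fun ω => (B ω, A ω, Θ ω)) (b, a, θ) / prEq p Θ θ =
        (prEq p (fun ω => (B ω, Θ ω)) (b, θ) / prEq p Θ θ) *
          (prEq p (fun ω => (A ω, Θ ω)) (a, θ) / prEq p Θ θ))
    (T : Ω → τty) (hT : ∀ ω, T ω = g (A ω) (B ω)) :
    entropy p (fun ω => (Θ ω, A ω)) - entropy p A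
      - (entropy p (fun ω => (Θ ω, (T ω, A ω))) - entropy p (fun ω => (T ω, A ω)))
      = entropy p Θ - (entropy p (fun ω => (Θ ω, B ω)) - entropy p B) := by
  have fTA : Function.Injective (fun x : bty × aty => (g x.2 x.1, x.2)) := by
    rintro ⟨b, a⟩ ⟨b', a'⟩ h
    simp only [Prod.mk.injEq] at h
    obtain ⟨h1, h2⟩ := h
    subst h2
    simp [hg a h1]
  have hTA : entropy p (fun ω => (T ω, A ω)) = entropy p (fun ω => (B ω, A ω)) :=
    entropy_comp_inj' p (fun ω => (B ω, A ω)) _ _ fTA (fun ω => by simp [hT])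
  have fΘTA : Function.Injective
      (fun x : θty × bty × aty => (x.1, (g x.2.2 x.2.1, x.2.2))) := by
    rintro ⟨θ, b, a⟩ ⟨θ', b', a'⟩ h
    simp only [Prod.mk.injEq] at h
    obtain ⟨h0, h1, h2⟩ := h
    subst h0; subst h2
    simp [hg a h1]
  have hΘTA : entropy p (fun ω => (Θ ω, (T ω, A ω))) =
      entropy p (fun ω => (Θ ω, (B ω, A ω))) :=
    entropy_comp_inj' p (fun ω => (Θ ω, (B ω, A ω))) _ _ fΘTA (fun ω => by simp [hT])
  have hrot : entropy p (fun ω => (Θ ω, (B ω, A ω))) =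
      entropy p (fun ω => (B ω, A ω, Θ ω)) := by
    have hf : Function.Injective (fun x : bty × aty × θty => (x.2.2, (x.1, x.2.1))) := by
      rintro ⟨b, a, θ⟩ ⟨b', a', θ'⟩ h
      simp only [Prod.mk.injEq] at h
      simp [h.1, h.2.1, h.2.2]
    exact entropy_comp_inj' p (fun ω => (B ω, A ω, Θ ω)) _ _ hf (fun ω => rfl)
  have hΘA : entropy p (fun ω => (Θ ω, A ω)) = entropy p (fun ω => (A ω, Θ ω)) := by
    have hf : Function.Injective (fun x : aty × θty => (x.2, x.1)) := by
      rintro ⟨a, θ⟩ ⟨a', θ'⟩ h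
      simp only [Prod.mk.injEq] at h
      simp [h.1, h.2]
    exact entropy_comp_inj' p (fun ω => (A ω, Θ ω)) _ _ hf (fun ω => rfl)
  have hΘB : entropy p (fun ω => (Θ ω, B ω)) = entropy p (fun ω => (B ω, Θ ω)) := by
    have hf : Function.Injective (fun x : bty × θty => (x.2, x.1)) := by
      rintro ⟨b, θ⟩ ⟨b', θ'⟩ h
      simp only [Prod.mk.injEq] at h
      simp [h.1, h.2]
    exact entropy_comp_inj' p (fun ω => (B ω, Θ ω)) _ _ hf (fun ω => rfl)
  have hBA : entropy p (fun ω => (B ω, A ω)) = entropy p B + entropy p A :=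
    entropy_pair_indep p hp1 A B hindep
  have htriple := entropy_triple_condindep p hp Θ A B hcondindep
  rw [hTA, hΘTA, hrot, hBA, hΘA, hΘB]
  linarith [htriple]

theorem condMutualInfo_new_task
    {Ω θty aty bty τty : Type*} [Fintype Ω]
    [Fintype θty] [DecidableEq θty] [Fintype aty] [DecidableEq aty]
    [Fintype bty] [DecidableEq bty] [Fintype τty] [DecidableEq τty]
    (p : Ω → ℝ) (hp : ∀ ω, 0 ≤ p ω) (hp1 : ∑ ω, p ω = 1)
    (Θ : Ω → θty) (A : Ω → aty) (B : Ω → bty)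
    (g : aty → bty → τty) (hg : ∀ a, Function.Injective (g a))
    (hindep : ∀ a b,
      prEq p (fun ω => (B ω, A ω)) (b, a) = prEq p B b * prEq p A a)
    (hcondindep : ∀ θ, 0 < prEq p Θ θ → ∀ a b,
      prEq p (fun ω => (B ω, A ω, Θ ω)) (b, a, θ) / prEq p Θ θ =
        (prEq p (fun ω => (B ω, Θ ω)) (b, θ) / prEq p Θ θ) *
          (prEq p (fun ω => (A ω, Θ ω)) (a, θ) / prEq p Θ θ))
    (T : Ω → τty) (hT : ∀ ω, T ω = g (A ω) (B ω)) :
    condMutualInfo p Θ T A = entropy p Θ - condEntropy p Θ B := by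
  unfold condMutualInfo condEntropy
  exact condMutualInfo_new_task' p hp hp1 Θ A B g hg hindep hcondindep T hT
end
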